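/- Fix $k \ge 1$. With $\chi^{(N)}$ defined by $\chi^{(0)}_{i,l} = \delta_{i,0}\delta_{l,0}$ and $\chi^{(N+1)}(q,z_1,z_2) = M(q,z_1,z_2)\chi^{(N)}(q,z_1,qz_2)$, for every $n \ge 0$ and all $N, N' \ge n$ one has $\chi^{(N)} \equiv \chi^{(N')} \pmod {q^n}$; consequently the limit $\chi = \lim_{N \to \infty} \chi^{(N)}$ exists in $(\mathbb{C}[[q]][z_1,z_2])^m$ (coefficientwise in powers of $q$), and this limit satisfies the difference equation $\chi(q,z_1,z_2) = M(q,z_1,z_2)\chi(q,z_1,qz_2)$ with $\chi_{i,l}(q,z_1,0)=\delta_{i,0}\delta_{l,0}$. -/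

import Mathlib

open MvPowerSeries

namespace DiffEqn

/-- Index set: pairs `(i,l)` with `0 ≤ i ≤ l ≤ k`. -/
abbrev PairIdx (k : ℕ) := {p : Fin (k + 1) × Fin (k + 1) // p.1 ≤ p.2}

/-- Formal power series in `q = X 0`, `z₁ = X 1`, `z₂ = X 2` over `ℂ`. -/
abbrev R := MvPowerSeries (Fin 3) ℂ

/-- The entry `M_{i,l}^{i',l'}` of `M(q,z₁,z₂)` (inequalities written additively
to avoid truncated subtraction). -/
noncomputable def Ment (k i l i' l' : ℕ) : R :=
  if l ≤ i' + i ∧ i' ≤ l' ∧ l' + i ≤ k then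
    ((X 0 : R) * X 1 * X 2) ^ (l' - i') * (X 2 : R) ^ i
  else if i' + i < l ∧ l ≤ l' + i ∧ l' + i ≤ k then
    ((X 0 : R) * X 1 * X 2) ^ (l' + i - l) * (X 2 : R) ^ i
  else 0

/-- The shift `S : f(q,z₁,z₂) ↦ f(q,z₁,qz₂)`, defined on coefficients:
the coefficient of `q^α z₁^β z₂^γ` in `S f` is that of `q^{α-γ} z₁^β z₂^γ` in `f`. -/
noncomputable def S (f : R) : R := fun d =>
  if d 2 ≤ d 0 then MvPowerSeries.coeff (d.update 0 (d 0 - d 2)) f else 0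

lemma coeff_S (f : R) (d : Fin 3 →₀ ℕ) :
    MvPowerSeries.coeff d (S f) =
      if d 2 ≤ d 0 then MvPowerSeries.coeff (d.update 0 (d 0 - d 2)) f else 0 := rfl

lemma fin3_eq_iff (d e : Fin 3 →₀ ℕ) : d = e ↔ d 0 = e 0 ∧ d 1 = e 1 ∧ d 2 = e 2 := by
  constructor
  · rintro rfl; exact ⟨rfl, rfl, rfl⟩
  · rintro ⟨h0, h1, h2⟩
    ext j
    fin_cases j <;> assumption

lemma update0_apply (d : Fin 3 →₀ ℕ) (v : ℕ) :
    (d.update 0 v) 0 = v ∧ (d.update 0 v) 1 = d 1 ∧ (d.update 0 v) 2 = d 2 := by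
  refine ⟨?_, ?_, ?_⟩ <;> simp [Finsupp.coe_update, Function.update_apply]

noncomputable def E (a i : ℕ) : Fin 3 →₀ ℕ :=
  Finsupp.single 0 a + Finsupp.single 1 a + Finsupp.single 2 (a + i)

lemma E_apply (a i : ℕ) : E a i 0 = a ∧ E a i 1 = a ∧ E a i 2 = a + i := by
  refine ⟨?_, ?_, ?_⟩ <;> simp [E, Finsupp.single_apply]

lemma mon_eq (a i : ℕ) :
    ((X 0 : R) * X 1 * X 2) ^ a * (X 2 : R) ^ i = monomial (E a i) 1 := by
  have h : ((X 0 : R) * X 1 * X 2) ^ a * (X 2 : R) ^ i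
      = (X 0 : R) ^ a * (X 1 : R) ^ a * (X 2 : R) ^ (a + i) := by ring
  rw [h, X_pow_eq, X_pow_eq, X_pow_eq, monomial_mul_monomial, monomial_mul_monomial,
    one_mul, one_mul, E]

lemma Ment_cases (k i l i' l' : ℕ) :
    Ment k i l i' l' = 0 ∨ ∃ a, Ment k i l i' l' = monomial (E a i) 1 := by
  unfold Ment
  split_ifs
  · exact Or.inr ⟨l' - i', mon_eq _ _⟩
  · exact Or.inr ⟨l' + i - l, mon_eq _ _⟩
  · exact Or.inl rfl

/-- Structure of a coefficient of `monomial (E a i) 1 * S f`. -/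
lemma coeff_mon_mul_S (a i : ℕ) (d : Fin 3 →₀ ℕ) :
    (∀ f : R, MvPowerSeries.coeff d (monomial (E a i) 1 * S f) = 0) ∨
    ∃ d' : Fin 3 →₀ ℕ,
      (∀ f : R, MvPowerSeries.coeff d (monomial (E a i) 1 * S f)
          = MvPowerSeries.coeff d' f) ∧
      d' 0 + d 2 = d 0 + i ∧ d' 2 + (a + i) = d 2 ∧ d' 1 + a = d 1 := by
  obtain ⟨e0, e1, e2⟩ := E_apply a i
  by_cases hE : E a i ≤ d
  · have hle := (Finsupp.le_def).1 hE
    have h0 : a ≤ d 0 := by have := hle 0; omega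
    have h1 : a ≤ d 1 := by have := hle 1; omega
    have h2 : a + i ≤ d 2 := by have := hle 2; omega
    have hd0 : (d - E a i) 0 = d 0 - a := by rw [Finsupp.tsub_apply, e0]
    have hd1 : (d - E a i) 1 = d 1 - a := by rw [Finsupp.tsub_apply, e1]
    have hd2 : (d - E a i) 2 = d 2 - (a + i) := by rw [Finsupp.tsub_apply, e2]
    by_cases hc : (d - E a i) 2 ≤ (d - E a i) 0
    · right
      refine ⟨(d - E a i).update 0 ((d - E a i) 0 - (d - E a i) 2), fun f => ?_, ?_, ?_, ?_⟩
      · rw [coeff_monomial_mul, if_pos hE, one_mul, coeff_S, if_pos hc]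
      · obtain ⟨u0, _, _⟩ := update0_apply (d - E a i) ((d - E a i) 0 - (d - E a i) 2)
        rw [u0, hd0, hd2]; omega
      · obtain ⟨_, _, u2⟩ := update0_apply (d - E a i) ((d - E a i) 0 - (d - E a i) 2)
        rw [u2, hd2]; omega
      · obtain ⟨_, u1, _⟩ := update0_apply (d - E a i) ((d - E a i) 0 - (d - E a i) 2)
        rw [u1, hd1]; omega
    · left
      intro f
      rw [coeff_monomial_mul, if_pos hE, one_mul, coeff_S, if_neg hc]
  · left
    intro f
    rw [coeff_monomial_mul, if_neg hE]

lemma Ment_mul_S_congr (k i l i' l' : ℕ) (f g : R) (d : Fin 3 →₀ ℕ)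
    (h : ∀ d' : Fin 3 →₀ ℕ, d' 0 + d 2 = d 0 + i → d' 2 + i ≤ d 2 →
      MvPowerSeries.coeff d' f = MvPowerSeries.coeff d' g) :
    MvPowerSeries.coeff d (Ment k i l i' l' * S f)
      = MvPowerSeries.coeff d (Ment k i l i' l' * S g) := by
  rcases Ment_cases k i l i' l' with h0 | ⟨a, ha⟩
  · rw [h0, zero_mul, zero_mul]
  · rw [ha]
    rcases coeff_mon_mul_S a i d with hz | ⟨d', hd', e1, e2, _⟩
    · rw [hz f, hz g]
    · rw [hd' f, hd' g]
      exact h d' e1 (by omega)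


-- finiteness of supports
lemma fin_S {f : R} (hf : {d : Fin 3 →₀ ℕ | MvPowerSeries.coeff d f ≠ 0}.Finite) :
    {d : Fin 3 →₀ ℕ | MvPowerSeries.coeff d (S f) ≠ 0}.Finite := by
  apply (hf.image (fun d' : Fin 3 →₀ ℕ => d'.update 0 (d' 0 + d' 2))).subset
  intro d hd
  simp only [Set.mem_setOf_eq] at hd
  rw [coeff_S] at hd
  by_cases hc : d 2 ≤ d 0
  · rw [if_pos hc] at hd
    refine ⟨d.update 0 (d 0 - d 2), hd, ?_⟩
    obtain ⟨u0, u1, u2⟩ := update0_apply d (d 0 - d 2)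
    set d' := d.update 0 (d 0 - d 2)
    obtain ⟨v0, v1, v2⟩ := update0_apply d' (d' 0 + d' 2)
    rw [fin3_eq_iff]
    refine ⟨?_, ?_, ?_⟩
    · rw [v0, u0, u2]; omega
    · rw [v1, u1]
    · rw [v2, u2]
  · rw [if_neg hc] at hd; exact absurd rfl hd

lemma fin_mon_mul {f : R} (e : Fin 3 →₀ ℕ)
    (hf : {d : Fin 3 →₀ ℕ | MvPowerSeries.coeff d f ≠ 0}.Finite) :
    {d : Fin 3 →₀ ℕ | MvPowerSeries.coeff d (monomial e 1 * f) ≠ 0}.Finite := by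
  apply (hf.image (fun d' : Fin 3 →₀ ℕ => d' + e)).subset
  intro d hd
  simp only [Set.mem_setOf_eq] at hd
  rw [coeff_monomial_mul] at hd
  by_cases hc : e ≤ d
  · rw [if_pos hc, one_mul] at hd
    exact ⟨d - e, hd, tsub_add_cancel_of_le hc⟩
  · rw [if_neg hc] at hd; exact absurd rfl hd

lemma fin_Ment_mul_S (k i l i' l' : ℕ) {f : R}
    (hf : {d : Fin 3 →₀ ℕ | MvPowerSeries.coeff d f ≠ 0}.Finite) :
    {d : Fin 3 →₀ ℕ | MvPowerSeries.coeff d (Ment k i l i' l' * S f) ≠ 0}.Finite := by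
  rcases Ment_cases k i l i' l' with h0 | ⟨a, ha⟩
  · rw [h0]
    simp [MvPowerSeries.coeff_zero]
  · rw [ha]
    exact fin_mon_mul _ (fin_S hf)

lemma fin_ite01 (c : Prop) [Decidable c] :
    {d : Fin 3 →₀ ℕ | MvPowerSeries.coeff d ((if c then 1 else 0 : R)) ≠ 0}.Finite := by
  split_ifs
  · apply (Set.finite_singleton (0 : Fin 3 →₀ ℕ)).subset
    intro d hd
    simp only [Set.mem_setOf_eq, MvPowerSeries.coeff_one] at hd
    by_cases h : d = 0
    · simpa using h
    · rw [if_neg h] at hd; exact absurd rfl hd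
  · simp [MvPowerSeries.coeff_zero]


lemma S_zero : S (0 : R) = 0 := by
  apply MvPowerSeries.ext
  intro d
  rw [coeff_S]
  simp

lemma S_one : S (1 : R) = 1 := by
  classical
  apply MvPowerSeries.ext
  intro d
  rw [coeff_S]
  obtain ⟨u0, u1, u2⟩ := update0_apply d (d 0 - d 2)
  by_cases hc : d 2 ≤ d 0
  · rw [if_pos hc, MvPowerSeries.coeff_one, MvPowerSeries.coeff_one]
    have h1 : d.update 0 (d 0 - d 2) = 0 ↔ d = 0 := by
      rw [fin3_eq_iff, fin3_eq_iff]
      simp only [Finsupp.coe_zero, Pi.zero_apply]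
      rw [u0, u1, u2]
      omega
    by_cases h : d = 0
    · rw [if_pos (h1.2 h), if_pos h]
    · rw [if_neg (fun hh => h (h1.1 hh)), if_neg h]
  · rw [if_neg hc, MvPowerSeries.coeff_one, if_neg]
    intro h
    subst h
    simp at hc

lemma Ment00 (k i l : ℕ) (hil : i ≤ l) (hlk : l ≤ k) (d : Fin 3 →₀ ℕ) (hd2 : d 2 = 0) :
    MvPowerSeries.coeff d (Ment k i l 0 0)
      = MvPowerSeries.coeff d (if i = 0 ∧ l = 0 then (1 : R) else 0) := by
  classical
  obtain ⟨e0, e1, e2⟩ := E_apply 0 i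
  unfold Ment
  by_cases hc1 : l ≤ 0 + i ∧ 0 ≤ 0 ∧ 0 + i ≤ k
  · rw [if_pos hc1]
    simp only [Nat.sub_zero]
    rw [mon_eq, coeff_monomial]
    by_cases h : d = E 0 i
    · have hdi : d 2 = 0 + i := by rw [h]; exact e2
      have hi0 : i = 0 := by omega
      have hl0 : l = 0 := by omega
      rw [if_pos h, if_pos ⟨hi0, hl0⟩, MvPowerSeries.coeff_one, if_pos]
      rw [fin3_eq_iff] at h ⊢
      simp only [Finsupp.coe_zero, Pi.zero_apply]
      rw [e0, e1, e2] at h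
      omega
    · rw [if_neg h]
      by_cases hil0 : i = 0 ∧ l = 0
      · rw [if_pos hil0, MvPowerSeries.coeff_one, if_neg]
        intro hd0
        apply h
        rw [fin3_eq_iff]
        rw [hd0]
        simp only [Finsupp.coe_zero, Pi.zero_apply]
        rw [e0, e1, e2]
        omega
      · rw [if_neg hil0, MvPowerSeries.coeff_zero]
  · rw [if_neg hc1, if_neg (by rintro ⟨a, b, c⟩; omega)]
    rw [if_neg (by rintro ⟨hi0, hl0⟩; exact hc1 (by omega))]



/-- The iterates `χ^{(N)}` (with `χ^{(0)}_{i,l} = δ_{i,0}δ_{l,0}` and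
`χ^{(N+1)}(q,z₁,z₂) = M(q,z₁,z₂)χ^{(N)}(q,z₁,qz₂)`) stabilize modulo every power
of `q`; the limit `χ` exists in `(ℂ[[q]][z₁,z₂])^m` and solves the difference
equation with the initial condition `χ_{i,l}(q,z₁,0) = δ_{i,0}δ_{l,0}`. -/
theorem iterates_converge (k : ℕ) (hk : 1 ≤ k)
    (χ : ℕ → PairIdx k → R)
    (h0 : ∀ p, χ 0 p = if (p.1.1 : ℕ) = 0 ∧ (p.1.2 : ℕ) = 0 then 1 else 0)
    (hrec : ∀ N p, χ (N + 1) p =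
      ∑ p' : PairIdx k,
        Ment k (p.1.1 : ℕ) (p.1.2 : ℕ) (p'.1.1 : ℕ) (p'.1.2 : ℕ) * S (χ N p')) :
    (∀ n N N', n ≤ N → n ≤ N' → ∀ p (d : Fin 3 →₀ ℕ), d 0 < n →
      MvPowerSeries.coeff d (χ N p) = MvPowerSeries.coeff d (χ N' p)) ∧
    ∃ χlim : PairIdx k → R,
      (∀ n N, n ≤ N → ∀ p (d : Fin 3 →₀ ℕ), d 0 < n →
        MvPowerSeries.coeff d (χlim p) = MvPowerSeries.coeff d (χ N p)) ∧
      (∀ (p : PairIdx k) (n : ℕ),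
        {d : Fin 3 →₀ ℕ | d 0 = n ∧ MvPowerSeries.coeff d (χlim p) ≠ 0}.Finite) ∧
      (∀ p : PairIdx k, χlim p =
        ∑ p' : PairIdx k,
          Ment k (p.1.1 : ℕ) (p.1.2 : ℕ) (p'.1.1 : ℕ) (p'.1.2 : ℕ) * S (χlim p')) ∧
      (∀ (p : PairIdx k) (d : Fin 3 →₀ ℕ), d 2 = 0 →
        MvPowerSeries.coeff d (χlim p) =
          if (p.1.1 : ℕ) = 0 ∧ (p.1.2 : ℕ) = 0 ∧ d = 0 then 1 else 0) := by
  classical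
  -- the key "one-step" invariant
  have key : ∀ N (p : PairIdx k) (d : Fin 3 →₀ ℕ), d 0 < N ∨ d 2 = 0 →
      MvPowerSeries.coeff d (χ (N + 1) p) = MvPowerSeries.coeff d (χ N p) := by
    intro N
    induction N with
    | zero =>
      intro p d hd
      have hd2 : d 2 = 0 := hd.resolve_left (fun h => absurd h (by omega))
      have hil : (p.1.1 : ℕ) ≤ (p.1.2 : ℕ) := p.2
      have hlk : (p.1.2 : ℕ) ≤ k := p.1.2.is_le
      rw [hrec 0 p, map_sum, h0 p]
      rw [Finset.sum_eq_single (⟨(0, 0), le_refl _⟩ : PairIdx k)]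
      · have h1 : χ 0 (⟨(0, 0), le_refl _⟩ : PairIdx k) = 1 := by rw [h0]; simp
        rw [h1, S_one, mul_one]
        exact Ment00 k _ _ hil hlk d hd2
      · intro p' _ hp'
        rw [h0 p', if_neg, S_zero, mul_zero, MvPowerSeries.coeff_zero]
        rintro ⟨h1, h2⟩
        apply hp'
        apply Subtype.ext
        apply Prod.ext
        · exact Fin.ext (by simp [h1])
        · exact Fin.ext (by simp [h2])
      · intro h
        exact absurd (Finset.mem_univ _) h
    | succ N ih =>
      intro p d hd
      rw [hrec (N + 1) p, hrec N p, map_sum, map_sum]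
      refine Finset.sum_congr rfl fun p' _ => ?_
      refine Ment_mul_S_congr k _ _ _ _ _ _ d fun d' h1 h2 => ih p' d' ?_
      omega
  have mono : ∀ n m, n ≤ m → ∀ (p : PairIdx k) (d : Fin 3 →₀ ℕ), (d 0 < n ∨ d 2 = 0) →
      MvPowerSeries.coeff d (χ m p) = MvPowerSeries.coeff d (χ n p) := by
    intro n m hnm
    induction m, hnm using Nat.le_induction with
    | base => intro p d _; rfl
    | succ m hm ih =>
      intro p d hd
      rw [key m p d ?_, ih p d hd]
      rcases hd with h | h
      · exact Or.inl (lt_of_lt_of_le h hm)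
      · exact Or.inr h
  have part1 : ∀ n N N', n ≤ N → n ≤ N' → ∀ (p : PairIdx k) (d : Fin 3 →₀ ℕ), d 0 < n →
      MvPowerSeries.coeff d (χ N p) = MvPowerSeries.coeff d (χ N' p) :=
    fun n N N' hN hN' p d hd =>
      (mono n N hN p d (Or.inl hd)).trans (mono n N' hN' p d (Or.inl hd)).symm
  have finχ : ∀ N (p : PairIdx k),
      {d : Fin 3 →₀ ℕ | MvPowerSeries.coeff d (χ N p) ≠ 0}.Finite := by
    intro N
    induction N with
    | zero => intro p; rw [h0]; exact fin_ite01 _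
    | succ N ih =>
      intro p
      rw [hrec]
      apply Set.Finite.subset
        (Set.finite_iUnion (fun p' : PairIdx k =>
          fin_Ment_mul_S k (p.1.1 : ℕ) (p.1.2 : ℕ) (p'.1.1 : ℕ) (p'.1.2 : ℕ) (ih p')))
      intro d hd
      simp only [Set.mem_setOf_eq, map_sum] at hd
      rw [Set.mem_iUnion]
      by_contra hC
      push_neg at hC
      apply hd
      apply Finset.sum_eq_zero
      intro p' _
      have := hC p'
      simp only [Set.mem_setOf_eq, not_not] at this
      exact this
  refine ⟨part1, fun p => (fun d => MvPowerSeries.coeff d (χ (d 0 + 1) p) : R), ?_, ?_, ?_, ?_⟩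
  all_goals {
    have hlim : ∀ (p : PairIdx k) (d : Fin 3 →₀ ℕ) (N : ℕ), (d 0 < N ∨ d 2 = 0) →
        MvPowerSeries.coeff d
          ((fun d => MvPowerSeries.coeff d (χ (d 0 + 1) p) : R))
          = MvPowerSeries.coeff d (χ N p) := by
      intro p d N hd
      show MvPowerSeries.coeff d (χ (d 0 + 1) p) = _
      rcases hd with h | h
      · exact (mono (d 0 + 1) N h p d (Or.inl (Nat.lt_succ_self _))).symm
      · rw [mono 0 (d 0 + 1) (Nat.zero_le _) p d (Or.inr h),
          mono 0 N (Nat.zero_le _) p d (Or.inr h)]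
    first
    | -- bullet 1
      exact fun n N hnN p d hd => hlim p d N (Or.inl (lt_of_lt_of_le hd hnN))
    | -- bullet 2
      (intro p n
       apply (finχ (n + 1) p).subset
       rintro d ⟨hd0, hne⟩
       simp only [Set.mem_setOf_eq]
       rwa [hlim p d (n + 1) (Or.inl (by omega))] at hne)
    | -- bullet 3
      (intro p
       apply MvPowerSeries.ext
       intro d
       rw [hlim p d (d 0 + 1) (Or.inl (Nat.lt_succ_self _)), hrec (d 0) p,
         map_sum, map_sum]
       refine Finset.sum_congr rfl fun p' _ => ?_
       refine Ment_mul_S_congr k _ _ _ _ _ _ d fun d' h1 h2 => ?_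
       exact (hlim p' d' (d 0) (by omega)).symm)
    | -- bullet 4
      (intro p d hd2
       rw [hlim p d 0 (Or.inr hd2), h0 p]
       by_cases h : (p.1.1 : ℕ) = 0 ∧ (p.1.2 : ℕ) = 0
       · rw [if_pos h, MvPowerSeries.coeff_one]
         by_cases hz : d = 0 <;> simp [h, hz]
       · rw [if_neg h, map_zero, if_neg (by rintro ⟨a, b, _⟩; exact h ⟨a, b⟩)]) }
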